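/- For every integer N ≥ 1, the S-matrix of the Z_N toric code is unitary: S · Sᴴ = 1, where Sᴴ is the conjugate transpose of the G×G matrix S. -/
import Mathlib


/-- Anyon labels of the Z_N toric code: the group ZMod N × ZMod N. -/
abbrev TCAnyon (N : ℕ) := ZMod N × ZMod N

/-- Topological twist θ(p,q) = exp(2πi·p̃·q̃/N) of the Z_N toric code. -/
noncomputable def tcTwist (N : ℕ) (a : TCAnyon N) : ℂ :=
  Complex.exp (2 * Real.pi * Complex.I * (a.1.val * a.2.val) / N)

/-- S-matrix of the Z_N toric code:
S((p₁,q₁),(p₂,q₂)) = (1/N)·exp(2πi·(p̃₁·q̃₂ + p̃₂·q̃₁)/N). -/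
noncomputable def tcS (N : ℕ) : Matrix (TCAnyon N) (TCAnyon N) ℂ :=
  fun a b => (1 / N) *
    Complex.exp (2 * Real.pi * Complex.I * (a.1.val * b.2.val + b.1.val * a.2.val) / N)

/-- T-matrix of the Z_N toric code: diagonal matrix of twists. -/
noncomputable def tcT (N : ℕ) : Matrix (TCAnyon N) (TCAnyon N) ℂ :=
  Matrix.diagonal (tcTwist N)

/-- Character sum for `ZMod N`: the sum of `exp(2πi·k·c̃/N)` over `c : ZMod N`
is `N` if `N ∣ k` and `0` otherwise. -/
lemma tc_sum_char (N : ℕ) [NeZero N] (k : ℤ) :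
    ∑ c : ZMod N, Complex.exp (2 * Real.pi * Complex.I * (k * c.val) / N)
      = if (k : ZMod N) = 0 then (N : ℂ) else 0 := by
  have h : ∀ c : ZMod N, Complex.exp (2 * Real.pi * Complex.I * (k * c.val) / N)
      = ZMod.stdAddChar (c * (k : ZMod N)) := by
    intro c
    have h2 : (c * (k : ZMod N)) = (((k * c.val : ℤ)) : ZMod N) := by
      push_cast [ZMod.natCast_zmod_val]; ring
    rw [h2, ZMod.stdAddChar_coe]
    congr 1
    push_cast
    ring
  rw [Finset.sum_congr rfl (fun c _ => h c),
    AddChar.sum_mulShift _ (ZMod.isPrimitive_stdAddChar N)]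
  simp [ZMod.card]

open Matrix in
/-- for every N ≥ 1, the S-matrix of the Z_N toric code is
unitary: S · Sᴴ = 1. -/
theorem tcS_unitary (N : ℕ) [NeZero N] :
    tcS N * (tcS N)ᴴ = 1 := by
  have hN : (N : ℂ) ≠ 0 := Nat.cast_ne_zero.2 (NeZero.ne N)
  ext a b
  rw [Matrix.mul_apply, Matrix.one_apply]
  have key : ∀ c : TCAnyon N, tcS N a c * (tcS N)ᴴ c b
      = (1 / (N:ℂ))^2 *
        (Complex.exp (2 * Real.pi * Complex.I * ((((a.2.val - b.2.val : ℤ)) : ℂ) * c.1.val) / N) *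
         Complex.exp (2 * Real.pi * Complex.I * ((((a.1.val - b.1.val : ℤ)) : ℂ) * c.2.val) / N)) := by
    intro c
    simp only [Matrix.conjTranspose_apply, tcS, star_mul', ← starRingEnd_apply,
      ← Complex.exp_conj, map_div₀, _root_.map_mul, map_add, _root_.map_one, Complex.conj_I,
      Complex.conj_ofReal, map_ofNat, Complex.conj_natCast]
    rw [mul_mul_mul_comm, ← Complex.exp_add, ← Complex.exp_add,
      show (1/(N:ℂ))^2 = 1/N * (1/N) by ring]
    congr 1
    exact congrArg Complex.exp (by push_cast; ring)
  rw [Finset.sum_congr rfl (fun c _ => key c), ← Finset.mul_sum, Fintype.sum_prod_type]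
  simp_rw [← Finset.mul_sum, ← Finset.sum_mul]
  rw [tc_sum_char, tc_sum_char]
  have h1 : (((a.1.val : ℤ) - b.1.val : ℤ) : ZMod N) = 0 ↔ a.1 = b.1 := by
    push_cast [ZMod.natCast_zmod_val]
    rw [sub_eq_zero]
  have h2 : (((a.2.val : ℤ) - b.2.val : ℤ) : ZMod N) = 0 ↔ a.2 = b.2 := by
    push_cast [ZMod.natCast_zmod_val]
    rw [sub_eq_zero]
  by_cases e1 : a.1 = b.1 <;> by_cases e2 : a.2 = b.2 <;>
    simp [h1, h2, e1, e2, Prod.ext_iff, hN, sub_eq_zero] <;>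
    (try field_simp) <;> ring
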